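/- Assume B is irreducible and SNR(λ,B) > 1. Then the function χ ↦ R(χ,1) attains a global minimum over [-1,∞)^L at some point χ* lying in the open cube (-1,0)^L; that is, there exists χ* with -1 < χ*_l < 0 for every l and R(χ*,1) ≤ R(χ,1) for all χ ∈ [-1,∞)^L. -/

import Mathlib

open Matrix

/-- A square matrix is irreducible if there is no nonempty proper subset `S` of the index set
with `A i j = 0` for all `i ∈ S` and `j ∉ S`. -/
def MatrixIrreducible {L : ℕ} (A : Matrix (Fin L) (Fin L) ℝ) : Prop :=
  ¬ ∃ S : Finset (Fin L), S.Nonempty ∧ S ≠ Finset.univ ∧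
      ∀ i ∈ S, ∀ j ∉ S, A i j = 0

/-- The matrix `C(χ) = σ B⁻¹ + Diag(λ ⊙ (χ + 𝟙))`. -/
noncomputable def Cmat {L : ℕ} (σ : ℝ) (lam : Fin L → ℝ) (B : Matrix (Fin L) (Fin L) ℝ)
    (χ : Fin L → ℝ) : Matrix (Fin L) (Fin L) ℝ :=
  σ • B⁻¹ + Matrix.diagonal (fun l => lam l * (χ l + 1))

/-- The replica-symmetric objective
`R(χ,σ) = log det(σ B⁻¹ + Diag(λ ⊙ (χ+𝟙))) + (1/2) ∑ λ_l χ_l²`. -/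
noncomputable def Rfun {L : ℕ} (σ : ℝ) (lam : Fin L → ℝ) (B : Matrix (Fin L) (Fin L) ℝ)
    (χ : Fin L → ℝ) : ℝ :=
  Real.log (Cmat σ lam B χ).det + (1 / 2) * ∑ l, lam l * χ l ^ 2

lemma log_cubic {x : ℝ} (hx : 0 ≤ x) :
    Real.log (1 + x) ≤ x - x ^ 2 / 2 + x ^ 3 / 3 := by
  have key : ∀ y ∈ Set.Ici (0:ℝ), HasDerivAt
      (fun z : ℝ => z - z ^ 2 / 2 + z ^ 3 / 3 - Real.log (1 + z))
      (1 - y + y ^ 2 - 1 / (1 + y)) y := by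
    intro y hy
    have h1 : (0:ℝ) < 1 + y := by simp at hy; linarith
    have hlog : HasDerivAt (fun z : ℝ => Real.log (1 + z)) (1 / (1 + y)) y := by
      have := (Real.hasDerivAt_log h1.ne').comp y
        ((hasDerivAt_id y).const_add 1)
      simpa [one_div, Function.comp_def] using this
    have hpoly : HasDerivAt (fun z : ℝ => z - z ^ 2 / 2 + z ^ 3 / 3)
        (1 - y + y ^ 2) y := by
      have := (((hasDerivAt_id y).sub ((hasDerivAt_pow 2 y).div_const 2)).add
        ((hasDerivAt_pow 3 y).div_const 3))
      refine this.congr_deriv ?_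
      norm_num
    exact hpoly.sub hlog
  have mono : MonotoneOn (fun z : ℝ => z - z ^ 2 / 2 + z ^ 3 / 3 - Real.log (1 + z))
      (Set.Ici (0:ℝ)) := by
    apply monotoneOn_of_deriv_nonneg (convex_Ici 0)
    · exact fun y hy => (key y hy).continuousAt.continuousWithinAt
    · intro y hy
      rw [interior_Ici] at hy
      exact ((key y (Set.mem_Ici.mpr (le_of_lt hy))).differentiableAt.differentiableWithinAt)
    · intro y hy
      rw [interior_Ici] at hy
      have hy' : (0:ℝ) < y := hy
      rw [(key y (le_of_lt hy')).deriv]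
      have h1 : (0:ℝ) < 1 + y := by linarith
      have : 1 - y + y ^ 2 - 1 / (1 + y) = y ^ 3 / (1 + y) := by
        field_simp; ring
      rw [this]
      positivity
  have h0 := mono (Set.self_mem_Ici) (by exact hx) hx
  simp at h0
  linarith

lemma spec {L : ℕ} (N : Matrix (Fin L) (Fin L) ℝ) (hN : N.PosSemidef) :
    ∃ μ : Fin L → ℝ, (∀ i, 0 ≤ μ i) ∧ ((1 + N).det = ∏ i, (1 + μ i)) ∧
      N.trace = ∑ i, μ i ∧ (N * N).trace = ∑ i, μ i ^ 2 := by
  classical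
  have hH := hN.1
  set U : Matrix (Fin L) (Fin L) ℝ := (hH.eigenvectorUnitary : Matrix (Fin L) (Fin L) ℝ) with hUdef
  have hU1 : U * star U = 1 := (Matrix.mem_unitaryGroup_iff).mp hH.eigenvectorUnitary.2
  have hU2 : star U * U = 1 := (Matrix.mem_unitaryGroup_iff').mp hH.eigenvectorUnitary.2
  set μ := hH.eigenvalues with hμdef
  have hDdef : Matrix.diagonal ((RCLike.ofReal ∘ μ : Fin L → ℝ)) = Matrix.diagonal μ := by
    rfl
  have hNspec : N = U * Matrix.diagonal μ * star U := by
    have := hH.spectral_theorem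
    rwa [Unitary.conjStarAlgAut_apply, hDdef] at this
  refine ⟨μ, hN.eigenvalues_nonneg, ?_, ?_, ?_⟩
  · have h1 : (1 : Matrix (Fin L) (Fin L) ℝ) + N
        = U * (Matrix.diagonal (fun i => 1 + μ i)) * star U := by
      have : Matrix.diagonal (fun i => 1 + μ i)
          = (1 : Matrix (Fin L) (Fin L) ℝ) + Matrix.diagonal μ := by
        rw [← Matrix.diagonal_one, Matrix.diagonal_add]
      rw [this, Matrix.mul_add, Matrix.add_mul, Matrix.mul_one, hU1, ← hNspec]
    rw [h1, Matrix.det_mul_right_comm, hU1, Matrix.one_mul, Matrix.det_diagonal]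
  · rw [hNspec, Matrix.trace_mul_cycle, hU2, Matrix.one_mul,
      Matrix.trace_diagonal]
  · have : N * N = U * (Matrix.diagonal μ * Matrix.diagonal μ) * star U := by
      rw [hNspec]
      calc U * Matrix.diagonal μ * star U * (U * Matrix.diagonal μ * star U)
          = U * Matrix.diagonal μ * (star U * U) * Matrix.diagonal μ * star U := by
            noncomm_ring
        _ = U * (Matrix.diagonal μ * Matrix.diagonal μ) * star U := by
            rw [hU2, Matrix.mul_one]; noncomm_ring
    rw [this, Matrix.trace_mul_cycle, hU2, Matrix.one_mul,
      Matrix.diagonal_mul_diagonal, Matrix.trace_diagonal]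
    exact Finset.sum_congr rfl fun i _ => (sq (μ i)).symm

open scoped MatrixOrder in
lemma detC {L : ℕ} (B : Matrix (Fin L) (Fin L) ℝ) (hB : B.PosDef)
    (d : Fin L → ℝ) (hd : ∀ i, 0 ≤ d i) :
    ∃ μ : Fin L → ℝ, (∀ i, 0 ≤ μ i) ∧
      (B⁻¹ + Matrix.diagonal d).det = B⁻¹.det * ∏ i, (1 + μ i) ∧
      ∑ i, μ i = ∑ i, d i * B i i ∧
      ∑ i, μ i ^ 2 = ∑ j, ∑ k, d j * B j k * (d k * B k j) := by
  classical
  set s := CFC.sqrt B with hsdef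
  have hss : s * s = B := CFC.sqrt_mul_sqrt_self B hB.posSemidef.nonneg
  have hsherm : s.IsHermitian := (CFC.sqrt_nonneg B).posSemidef.1
  have hdetB : 0 < B.det := hB.det_pos
  have hdets : s.det ≠ 0 := by
    intro h
    have hBd : B.det = s.det * s.det := by rw [← hss, Matrix.det_mul]
    rw [h, mul_zero] at hBd
    rw [hBd] at hdetB
    exact lt_irrefl 0 hdetB
  have hsinv : s⁻¹ * s = 1 := Matrix.nonsing_inv_mul s (Ne.isUnit hdets)
  have hsinv' : s * s⁻¹ = 1 := Matrix.mul_nonsing_inv s (Ne.isUnit hdets)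
  have hBinv : B⁻¹ = s⁻¹ * s⁻¹ := by
    rw [← hss, Matrix.mul_inv_rev]
  set N := s * Matrix.diagonal d * s with hNdef
  have hNpsd : N.PosSemidef := by
    have h1 : (Matrix.diagonal d).PosSemidef := Matrix.PosSemidef.diagonal (by
      intro i; exact hd i)
    have := h1.mul_mul_conjTranspose_same s
    rwa [hsherm.eq] at this
  obtain ⟨μ, hμ0, hμdet, hμtr, hμtr2⟩ := spec N hNpsd
  refine ⟨μ, hμ0, ?_, ?_, ?_⟩
  · have hfac : B⁻¹ + Matrix.diagonal d = s⁻¹ * (1 + N) * s⁻¹ := by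
      have h2 : s⁻¹ * (1 + N) * s⁻¹
          = s⁻¹ * s⁻¹ + (s⁻¹ * s) * Matrix.diagonal d * (s * s⁻¹) := by
        rw [hNdef]; noncomm_ring
      rw [h2, hsinv, hsinv', Matrix.one_mul, Matrix.mul_one, hBinv]
    rw [hfac, Matrix.det_mul, Matrix.det_mul, hμdet, hBinv, Matrix.det_mul]
    ring
  · rw [← hμtr, hNdef, Matrix.trace_mul_cycle]
    have : s * (s * Matrix.diagonal d) = B * Matrix.diagonal d := by
      rw [← Matrix.mul_assoc, hss]
    rw [Matrix.mul_assoc, this, Matrix.trace_mul_comm]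
    simp [Matrix.trace, Matrix.diag, Matrix.diagonal_mul]
  · rw [← hμtr2, hNdef]
    have hNN : (s * Matrix.diagonal d * s) * (s * Matrix.diagonal d * s)
        = s * (Matrix.diagonal d * B * Matrix.diagonal d) * s := by
      calc (s * Matrix.diagonal d * s) * (s * Matrix.diagonal d * s)
          = s * (Matrix.diagonal d * (s * s) * Matrix.diagonal d) * s := by noncomm_ring
        _ = s * (Matrix.diagonal d * B * Matrix.diagonal d) * s := by rw [hss]
    rw [hNN, Matrix.trace_mul_cycle]
    have : s * (s * (Matrix.diagonal d * B * Matrix.diagonal d))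
        = B * (Matrix.diagonal d * B * Matrix.diagonal d) := by
      rw [← Matrix.mul_assoc, hss]
    rw [Matrix.mul_assoc, this]
    have expand : B * (Matrix.diagonal d * B * Matrix.diagonal d)
        = (B * Matrix.diagonal d) * (B * Matrix.diagonal d) := by noncomm_ring
    rw [expand, Matrix.trace]
    simp only [Matrix.diag_apply, Matrix.mul_apply, Matrix.diagonal_apply, mul_ite, mul_zero,
      Finset.sum_ite_eq', Finset.mem_univ, if_true]
    rw [Finset.sum_comm]
    refine Finset.sum_congr rfl fun j _ => Finset.sum_congr rfl fun k _ => ?_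
    ring

lemma det_add_single {L : ℕ} (A : Matrix (Fin L) (Fin L) ℝ) (l : Fin L) (t : ℝ)
    (hA : A.det ≠ 0) :
    (A + Matrix.diagonal (Pi.single l t)).det = A.det * (1 + t * A⁻¹ l l) := by
  classical
  have h1 : A + Matrix.diagonal (Pi.single l t) = A.updateRow l (A l + Pi.single l t) := by
    ext i j
    by_cases h : i = l
    · subst h
      simp [Matrix.updateRow_apply, Matrix.diagonal_apply, Pi.single_apply, eq_comm]
    · simp only [Matrix.updateRow_apply, if_neg h, Matrix.add_apply,
        Matrix.diagonal_apply, Pi.single_apply, add_eq_left]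
      by_cases h2 : i = j
      · subst h2; simp [h]
      · simp [h2]
  have hsingle : Pi.single l t = t • (Pi.single l 1 : Fin L → ℝ) := by
    ext j
    by_cases h : j = l
    · subst h; simp
    · simp [Pi.single_apply, h]
  rw [h1, Matrix.det_updateRow_add, Matrix.updateRow_eq_self, hsingle,
    Matrix.det_updateRow_smul, ← Matrix.adjugate_apply]
  have hinv : A⁻¹ l l = (A.det)⁻¹ * A.adjugate l l := by
    rw [Matrix.inv_def]
    simp [Ring.inverse_eq_inv]
  rw [hinv]
  field_simp

lemma posdef_diag_pos {L : ℕ} {M : Matrix (Fin L) (Fin L) ℝ} (hM : M.PosDef) (l : Fin L) :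
    0 < M l l := by
  have h := hM.dotProduct_mulVec_pos (x := Pi.single l 1) (by
    intro h
    have := congrFun h l
    simp at this)
  simpa [dotProduct, Matrix.mulVec, Pi.single_apply] using h

section main

variable {L : ℕ} (lam : Fin L → ℝ) (B : Matrix (Fin L) (Fin L) ℝ)

/-- det lower bound: `det B⁻¹ ≤ det (B⁻¹ + diagonal d)` for `d ≥ 0`. -/
lemma detC_lower {L : ℕ} (B : Matrix (Fin L) (Fin L) ℝ) (hB : B.PosDef)
    (d : Fin L → ℝ) (hd : ∀ i, 0 ≤ d i) :
    B⁻¹.det ≤ (B⁻¹ + Matrix.diagonal d).det := by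
  obtain ⟨μ, hμ0, hdet, -, -⟩ := detC B hB d hd
  rw [hdet]
  have h1 : (1:ℝ) ≤ ∏ i, (1 + μ i) := by
    calc (1:ℝ) = ∏ _i : Fin L, 1 := by simp
    _ ≤ ∏ i, (1 + μ i) := by
        apply Finset.prod_le_prod
        · intro i _; norm_num
        · intro i _; linarith [hμ0 i]
  nlinarith [hB.inv.det_pos]

section main

variable {L : ℕ} (lam : Fin L → ℝ) (B : Matrix (Fin L) (Fin L) ℝ)

lemma Cmat_eq (χ : Fin L → ℝ) :
    Cmat 1 lam B χ = B⁻¹ + Matrix.diagonal (fun j => lam j * (χ j + 1)) := by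
  rw [Cmat, one_smul]

lemma Cmat_posdef (hB : B.PosDef) (hlam : ∀ l, 0 < lam l) (χ : Fin L → ℝ)
    (hχ : ∀ l, -1 ≤ χ l) : (Cmat 1 lam B χ).PosDef := by
  rw [Cmat_eq]
  refine hB.inv.add_posSemidef (Matrix.PosSemidef.diagonal ?_)
  intro i
  simp only [Pi.zero_apply]
  nlinarith [hχ i, (hlam i).le]

lemma Cmat_perturb (l : Fin L) (t : ℝ) (χ : Fin L → ℝ) :
    Cmat 1 lam B (χ + Pi.single l t)
      = Cmat 1 lam B χ + Matrix.diagonal (Pi.single l (lam l * t)) := by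
  have hfun : (fun j => lam j * ((χ + (Pi.single l t : Fin L → ℝ)) j + 1))
      = fun i => lam i * (χ i + 1) + (Pi.single l (lam l * t) : Fin L → ℝ) i := by
    funext j
    rcases eq_or_ne j l with h | h
    · subst h
      simp only [Pi.add_apply, Pi.single_eq_same]
      ring
    · simp only [Pi.add_apply, Pi.single_eq_of_ne h, add_zero]
  rw [Cmat_eq, Cmat_eq, add_assoc, Matrix.diagonal_add]
  congr 1
  exact congrArg Matrix.diagonal hfun

lemma Rfun_perturb (hB : B.PosDef) (hlam : ∀ l, 0 < lam l) (χ : Fin L → ℝ)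
    (hχ : ∀ l, -1 ≤ χ l) (l : Fin L) (t : ℝ)
    (hpos : 0 < 1 + lam l * t * ((Cmat 1 lam B χ)⁻¹ l l)) :
    Rfun 1 lam B (χ + Pi.single l t)
      = Rfun 1 lam B χ + Real.log (1 + lam l * t * ((Cmat 1 lam B χ)⁻¹ l l))
        + lam l * (χ l * t + t ^ 2 / 2) := by
  have hC : (Cmat 1 lam B χ).PosDef := Cmat_posdef lam B hB hlam χ hχ
  have hdet : (Cmat 1 lam B χ).det ≠ 0 := hC.det_pos.ne'
  have h1 : (Cmat 1 lam B (χ + Pi.single l t)).det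
      = (Cmat 1 lam B χ).det * (1 + lam l * t * ((Cmat 1 lam B χ)⁻¹ l l)) := by
    rw [Cmat_perturb, det_add_single _ _ _ hdet]
  rw [Rfun, Rfun, h1, Real.log_mul hdet hpos.ne']
  have h2 : ∑ j, lam j * (χ j + (Pi.single l t : Fin L → ℝ) j) ^ 2
      = (∑ j, lam j * (χ j) ^ 2) + lam l * (2 * χ l * t + t ^ 2) := by
    have key : ∀ j : Fin L, lam j * (χ j + (Pi.single l t : Fin L → ℝ) j) ^ 2
        = lam j * (χ j) ^ 2 + (if j = l then lam l * (2 * χ l * t + t ^ 2) else 0) := by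
      intro j
      rcases eq_or_ne j l with h | h
      · subst h
        rw [Pi.single_eq_same, if_pos rfl]
        ring
      · simp only [Pi.single_eq_of_ne h, if_neg h, add_zero]
    rw [Finset.sum_congr rfl fun j _ => key j, Finset.sum_add_distrib,
      Finset.sum_ite_eq' Finset.univ l (fun _ => lam l * (2 * χ l * t + t ^ 2))]
    simp
  simp only [Pi.add_apply]
  rw [h2]
  ring

/-- first-order optimality conditions at a constrained global minimiser -/
lemma first_order (hB : B.PosDef) (hlam : ∀ l, 0 < lam l) (χs : Fin L → ℝ)
    (hdom : ∀ l, -1 ≤ χs l)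
    (hmin : ∀ χ : Fin L → ℝ, (∀ l, -1 ≤ χ l) → Rfun 1 lam B χs ≤ Rfun 1 lam B χ)
    (l : Fin L) :
    0 ≤ (Cmat 1 lam B χs)⁻¹ l l + χs l ∧
      (-1 < χs l → (Cmat 1 lam B χs)⁻¹ l l + χs l ≤ 0) := by
  have hC : (Cmat 1 lam B χs).PosDef := Cmat_posdef lam B hB hlam χs hdom
  set α := (Cmat 1 lam B χs)⁻¹ l l with hαdef
  have hα0 : 0 < α := posdef_diag_pos hC.inv l
  have hlaml := hlam l
  constructor
  · by_contra hcon
    push_neg at hcon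
    set t := -(α + χs l) with ht
    have ht0 : 0 < t := by simp only [ht]; linarith
    have hpos : 0 < 1 + lam l * t * α := by
      nlinarith [mul_pos (mul_pos hlaml ht0) hα0]
    have hdom' : ∀ j, -1 ≤ (χs + (Pi.single l t : Fin L → ℝ)) j := by
      intro j
      rcases eq_or_ne j l with h | h
      · subst h
        simp only [Pi.add_apply, Pi.single_eq_same]
        linarith [hdom j]
      · simpa only [Pi.add_apply, Pi.single_eq_of_ne h, add_zero] using hdom j
    have hmin' := hmin _ hdom'
    have heq := Rfun_perturb lam B hB hlam χs hdom l t hpos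
    have hlog : Real.log (1 + lam l * t * α) ≤ lam l * t * α := by
      have := Real.log_le_sub_one_of_pos hpos
      linarith
    rw [heq, ← hαdef] at hmin'
    have hq : t * α + (χs l * t + t ^ 2 / 2) = -(t ^ 2) / 2 := by
      rw [ht]; ring
    clear_value t
    clear_value α
    nlinarith [hmin', hlog, mul_le_mul_of_nonneg_left (le_of_eq hq) hlaml.le,
      mul_pos hlaml (mul_pos ht0 ht0)]
  · intro hgt
    by_contra hcon
    push_neg at hcon
    have hβ : 0 < α + χs l := hcon
    set β := α + χs l with hβdef
    set ε := min β (min (1 + χs l) (1 / (2 * lam l * α))) with hεdef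
    have hε0 : 0 < ε :=
      lt_min hβ (lt_min (by linarith) (by positivity))
    have hεβ : ε ≤ β := min_le_left _ _
    have hεd : ε ≤ 1 + χs l := le_trans (min_le_right _ _) (min_le_left _ _)
    have hεα : ε ≤ 1 / (2 * lam l * α) := le_trans (min_le_right _ _) (min_le_right _ _)
    set t := -ε with htdef
    have hhalf : lam l * ε * α ≤ 1 / 2 := by
      have h2 : lam l * ε * α ≤ lam l * (1 / (2 * lam l * α)) * α := by
        have := mul_le_mul_of_nonneg_right (mul_le_mul_of_nonneg_left hεα hlaml.le) hα0.le
        linarith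
      have h3 : lam l * (1 / (2 * lam l * α)) * α = 1 / 2 := by
        field_simp
      linarith
    have hpos : 0 < 1 + lam l * t * α := by
      have : lam l * t * α = -(lam l * ε * α) := by rw [htdef]; ring
      rw [this]
      linarith
    have hdom' : ∀ j, -1 ≤ (χs + (Pi.single l t : Fin L → ℝ)) j := by
      intro j
      rcases eq_or_ne j l with h | h
      · subst h
        simp only [Pi.add_apply, Pi.single_eq_same, htdef]
        linarith
      · simpa only [Pi.add_apply, Pi.single_eq_of_ne h, add_zero] using hdom j
    have hmin' := hmin _ hdom'
    have heq := Rfun_perturb lam B hB hlam χs hdom l t hpos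
    have hlog : Real.log (1 + lam l * t * α) ≤ lam l * t * α := by
      have := Real.log_le_sub_one_of_pos hpos
      linarith
    rw [heq, ← hαdef] at hmin'
    have hq : t * α + (χs l * t + t ^ 2 / 2) = -(ε * β) + ε ^ 2 / 2 := by
      rw [htdef]; ring
    have hq2 : ε ^ 2 / 2 ≤ ε * β / 2 := by nlinarith
    clear_value t
    clear_value ε
    clear_value β
    clear_value α
    nlinarith [hmin', hlog, mul_le_mul_of_nonneg_left (le_of_eq hq) hlaml.le,
      mul_le_mul_of_nonneg_left hq2 hlaml.le, mul_pos hlaml (mul_pos hε0 hβ)]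


lemma exists_min (hL : 0 < L) (hB : B.PosDef) (hlam : ∀ l, 0 < lam l) :
    ∃ χs : Fin L → ℝ, (∀ l, -1 ≤ χs l) ∧
      ∀ χ : Fin L → ℝ, (∀ l, -1 ≤ χ l) → Rfun 1 lam B χs ≤ Rfun 1 lam B χ := by
  haveI : Nonempty (Fin L) := ⟨⟨0, hL⟩⟩
  have hBinvdet : 0 < B⁻¹.det := hB.inv.det_pos
  -- uniform positive lower bound for lam
  set lmin := Finset.univ.inf' Finset.univ_nonempty lam with hlmindef
  have hlmin0 : 0 < lmin := by
    rw [hlmindef, Finset.lt_inf'_iff]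
    exact fun l _ => hlam l
  have hlmin_le : ∀ l, lmin ≤ lam l := fun l =>
    Finset.inf'_le _ (Finset.mem_univ l)
  -- lower bound for the log det term
  have hlogdet : ∀ χ : Fin L → ℝ, (∀ l, -1 ≤ χ l) →
      Real.log B⁻¹.det ≤ Real.log (Cmat 1 lam B χ).det := by
    intro χ hχ
    have hd : ∀ i, 0 ≤ lam i * (χ i + 1) := fun i => by nlinarith [hχ i, (hlam i).le]
    have := detC_lower B hB (fun j => lam j * (χ j + 1)) hd
    rw [Cmat_eq]
    exact Real.log_le_log hBinvdet this
  set R0 := Rfun 1 lam B (fun _ => (0:ℝ)) with hR0def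
  set T : ℝ := 1 + Real.sqrt (2 * max 0 (R0 - Real.log B⁻¹.det) / lmin) with hTdef
  have hsqrt0 : 0 ≤ Real.sqrt (2 * max 0 (R0 - Real.log B⁻¹.det) / lmin) :=
    Real.sqrt_nonneg _
  have hT1 : 1 ≤ T := by rw [hTdef]; linarith
  have hT2 : max 0 (R0 - Real.log B⁻¹.det) < lmin * T ^ 2 / 2 := by
    have hx : 0 ≤ 2 * max 0 (R0 - Real.log B⁻¹.det) / lmin := by
      have := le_max_left (0:ℝ) (R0 - Real.log B⁻¹.det)
      positivity
    have hsq : Real.sqrt (2 * max 0 (R0 - Real.log B⁻¹.det) / lmin) ^ 2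
        = 2 * max 0 (R0 - Real.log B⁻¹.det) / lmin := Real.sq_sqrt hx
    have hTgt : Real.sqrt (2 * max 0 (R0 - Real.log B⁻¹.det) / lmin) < T := by
      rw [hTdef]; linarith
    have h2 : Real.sqrt (2 * max 0 (R0 - Real.log B⁻¹.det) / lmin) ^ 2 < T ^ 2 := by
      nlinarith
    rw [hsq] at h2
    rw [div_lt_iff₀ hlmin0] at h2
    nlinarith
  clear_value T
  clear_value lmin
  -- points outside the box have large value
  have houtside : ∀ χ : Fin L → ℝ, (∀ l, -1 ≤ χ l) → (∃ l, T < χ l) →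
      R0 < Rfun 1 lam B χ := by
    intro χ hχ ⟨l, hl⟩
    have h1 : Real.log B⁻¹.det ≤ Real.log (Cmat 1 lam B χ).det := hlogdet χ hχ
    have h2 : lam l * χ l ^ 2 ≤ ∑ j, lam j * χ j ^ 2 := by
      apply Finset.single_le_sum (f := fun j => lam j * χ j ^ 2)
      · intro j _
        have := (hlam j).le
        positivity
      · exact Finset.mem_univ l
    have h3 : lmin * T ^ 2 ≤ lam l * χ l ^ 2 := by
      have hTχ : T ^ 2 ≤ χ l ^ 2 := by nlinarith
      have := hlmin_le l
      nlinarith [(hlam l).le]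
    have h4 : R0 - Real.log B⁻¹.det < lmin * T ^ 2 / 2 :=
      lt_of_le_of_lt (le_max_right _ _) hT2
    rw [Rfun]
    linarith
  -- continuity on the domain
  have hcont : ∀ χ0 : Fin L → ℝ, (∀ l, -1 ≤ χ0 l) →
      ContinuousAt (Rfun 1 lam B) χ0 := by
    intro χ0 hχ0
    have hCm : Continuous fun χ : Fin L → ℝ => Cmat 1 lam B χ := by
      have : (fun χ : Fin L → ℝ => Cmat 1 lam B χ)
          = fun χ => B⁻¹ + Matrix.diagonal (fun j => lam j * (χ j + 1)) := by
        funext χ; exact Cmat_eq lam B χ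
      rw [this]
      refine continuous_const.add ?_
      apply continuous_matrix
      intro i j
      by_cases h : i = j
      · subst h
        simp only [Matrix.diagonal_apply_eq]
        exact continuous_const.mul ((continuous_apply i).add continuous_const)
      · simp only [Matrix.diagonal_apply_ne _ h]
        exact continuous_const
    have hdetc : Continuous fun χ : Fin L → ℝ => (Cmat 1 lam B χ).det :=
      hCm.matrix_det
    have hdpos : (Cmat 1 lam B χ0).det ≠ 0 :=
      (Cmat_posdef lam B hB hlam χ0 hχ0).det_pos.ne'
    have hlogc : ContinuousAt (fun χ : Fin L → ℝ => Real.log (Cmat 1 lam B χ).det) χ0 :=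
      ContinuousAt.comp (x := χ0) (Real.continuousAt_log hdpos) hdetc.continuousAt
    have hsumc : Continuous fun χ : Fin L → ℝ => (1/2 : ℝ) * ∑ l, lam l * χ l ^ 2 := by
      refine continuous_const.mul (continuous_finset_sum _ fun l _ => ?_)
      exact continuous_const.mul ((continuous_apply l).pow 2)
    exact hlogc.add hsumc.continuousAt
  -- compact box
  set K : Set (Fin L → ℝ) := Set.Icc (fun _ => (-1:ℝ)) (fun _ => T) with hKdef
  have hKcpt : IsCompact K := isCompact_Icc
  have hKne : K.Nonempty := by
    refine ⟨fun _ => 0, ?_, ?_⟩ <;> intro l <;> simp <;> linarith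
  have hKdom : ∀ χ ∈ K, ∀ l, -1 ≤ χ l := by
    intro χ hχ l
    exact hχ.1 l
  obtain ⟨χs, hχsK, hminK⟩ := hKcpt.exists_isMinOn hKne
    (fun χ hχ => (hcont χ (hKdom χ hχ)).continuousWithinAt)
  have hχsdom : ∀ l, -1 ≤ χs l := hKdom χs hχsK
  have h0K : (fun _ : Fin L => (0:ℝ)) ∈ K := by
    refine ⟨?_, ?_⟩ <;> intro l <;> simp <;> linarith
  have hχs0 : Rfun 1 lam B χs ≤ R0 := by
    have := hminK h0K
    simpa [hR0def] using this
  refine ⟨χs, hχsdom, ?_⟩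
  intro χ hχ
  by_cases hin : ∀ l, χ l ≤ T
  · exact hminK ⟨fun l => hχ l, fun l => hin l⟩
  · push_neg at hin
    obtain ⟨l, hl⟩ := hin
    have := houtside χ hχ ⟨l, hl⟩
    linarith


lemma boundary {L : ℕ} (lam : Fin L → ℝ) (B : Matrix (Fin L) (Fin L) ℝ)
    (hB : B.PosDef) (hBdiag : ∀ l, B l l = 1) (hlam : ∀ l, 0 < lam l)
    (χs : Fin L → ℝ) (hdom : ∀ l, -1 ≤ χs l)
    (l : Fin L) (hl : χs l = -1) (hα : 1 ≤ (Cmat 1 lam B χs)⁻¹ l l) :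
    ∀ j, χs j ≠ -1 → B l j = 0 := by
  classical
  set d : Fin L → ℝ := fun j => lam j * (χs j + 1) with hddef
  set D : Matrix (Fin L) (Fin L) ℝ := Matrix.diagonal d with hDdef
  have hCeq : Cmat 1 lam B χs = B⁻¹ + D := Cmat_eq lam B χs
  set C : Matrix (Fin L) (Fin L) ℝ := B⁻¹ + D with hCdef
  rw [hCeq] at hα
  have hC : C.PosDef := hCeq ▸ Cmat_posdef lam B hB hlam χs hdom
  have hCu : IsUnit C.det := hC.det_pos.ne'.isUnit
  have hBu : IsUnit B.det := hB.det_pos.ne'.isUnit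
  have hCinvC : C⁻¹ * C = 1 := Matrix.nonsing_inv_mul C hCu
  have hCCinv : C * C⁻¹ = 1 := Matrix.mul_nonsing_inv C hCu
  have hBinvB : B⁻¹ * B = 1 := Matrix.nonsing_inv_mul B hBu
  have hBBinv : B * B⁻¹ = 1 := Matrix.mul_nonsing_inv B hBu
  -- symmetry of C⁻¹ and of B
  have hsymB : ∀ j k, B j k = B k j := by
    intro j k
    have := congrFun (congrFun hB.1 j) k
    simpa [Matrix.conjTranspose_apply] using this.symm
  have hsymCi : ∀ j k, C⁻¹ j k = C⁻¹ k j := by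
    intro j k
    have := congrFun (congrFun hC.inv.1 j) k
    simpa [Matrix.conjTranspose_apply] using this.symm
  set v : Fin L → ℝ := fun k => C⁻¹ k l with hvdef
  set u : Fin L → ℝ := fun k => d k * v k with hudef
  -- algebraic identities
  have hIdA : C * B * C - C = D + D * B * D := by
    have h1 : C * B * C = B⁻¹ * B * B⁻¹ + B⁻¹ * B * D + D * (B * B⁻¹) + D * B * D := by
      rw [hCdef]; noncomm_ring
    rw [h1, hBinvB, hBBinv, Matrix.one_mul, Matrix.mul_one, hCdef]
    noncomm_ring
  have hId2 : B - C⁻¹ = C⁻¹ * (D + D * B * D) * C⁻¹ := by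
    rw [← hIdA]
    have h2 : C⁻¹ * (C * B * C - C) * C⁻¹
        = (C⁻¹ * C) * B * (C * C⁻¹) - C⁻¹ * (C * C⁻¹) := by noncomm_ring
    rw [h2, hCinvC, hCCinv, Matrix.one_mul, Matrix.mul_one, Matrix.mul_one]
  have hId3 : B - C⁻¹ = B * D * C⁻¹ := by
    have e1 : (B - C⁻¹) * C = B * D := by
      rw [Matrix.sub_mul, hCinvC]
      nth_rewrite 1 [hCdef]
      rw [Matrix.mul_add, hBBinv]
      noncomm_ring
    calc B - C⁻¹ = (B - C⁻¹) * (C * C⁻¹) := by rw [hCCinv, Matrix.mul_one]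
      _ = ((B - C⁻¹) * C) * C⁻¹ := by rw [Matrix.mul_assoc]
      _ = B * D * C⁻¹ := by rw [e1]
  -- entry (l,l) of identity 2
  have e1 : ∀ a b, (C⁻¹ * D) a b = C⁻¹ a b * d b := by
    intro a b
    rw [hDdef]
    exact Matrix.mul_diagonal _ _ _ _
  have e2 : ∀ a b, (D * C⁻¹) a b = d a * C⁻¹ a b := by
    intro a b
    rw [hDdef]
    exact Matrix.diagonal_mul _ _ _ _
  have hT1 : (C⁻¹ * D * C⁻¹) l l = ∑ j, d j * v j ^ 2 := by
    rw [Matrix.mul_apply]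
    refine Finset.sum_congr rfl fun j _ => ?_
    rw [e1, hsymCi l j]
    simp only [hvdef]
    ring
  have hT2 : (C⁻¹ * (D * B * D) * C⁻¹) l l = ∑ j, ∑ k, u j * B j k * u k := by
    have hassoc : C⁻¹ * (D * B * D) * C⁻¹ = (C⁻¹ * D) * B * (D * C⁻¹) := by
      noncomm_ring
    rw [hassoc]
    rw [Matrix.mul_apply]
    have step1 : ∀ k, ((C⁻¹ * D) * B) l k * (D * C⁻¹) k l
        = ∑ j, (C⁻¹ l j * d j) * B j k * (d k * C⁻¹ k l) := by
      intro k
      rw [Matrix.mul_apply, e2, Finset.sum_mul]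
      refine Finset.sum_congr rfl fun j _ => ?_
      rw [e1]
    rw [Finset.sum_congr rfl fun k _ => step1 k, Finset.sum_comm]
    refine Finset.sum_congr rfl fun j _ => Finset.sum_congr rfl fun k _ => ?_
    rw [hsymCi l j]
    simp only [hudef, hvdef]
    ring
  have hentry : (B - C⁻¹) l l = (∑ j, d j * v j ^ 2) + ∑ j, ∑ k, u j * B j k * u k := by
    rw [hId2, Matrix.mul_add, Matrix.add_mul, Matrix.add_apply, hT1, hT2]
  have hBll : (B - C⁻¹) l l ≤ 0 := by
    rw [Matrix.sub_apply, hBdiag l]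
    linarith
  have hd0 : ∀ j, 0 ≤ d j := fun j => by
    have := hdom j; have := (hlam j).le
    simp only [hddef]; nlinarith
  have hS1 : 0 ≤ ∑ j, d j * v j ^ 2 := by
    apply Finset.sum_nonneg
    intro j _
    have := hd0 j
    positivity
  have hquad : ∑ j, ∑ k, u j * B j k * u k = star u ⬝ᵥ B *ᵥ u := by
    simp only [dotProduct, Matrix.mulVec, Pi.star_apply, star_trivial,
      Finset.mul_sum, dotProduct]
    refine Finset.sum_congr rfl fun j _ => Finset.sum_congr rfl fun k _ => ?_
    ring
  have hS2 : 0 ≤ ∑ j, ∑ k, u j * B j k * u k := by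
    rw [hquad]; exact hB.posSemidef.dotProduct_mulVec_nonneg u
  have hu0 : u = 0 := by
    by_contra hne
    have hpos := hB.dotProduct_mulVec_pos hne
    rw [← hquad] at hpos
    linarith
  intro j hj
  have hdj : 0 < d j := by
    have h1 : -1 < χs j := lt_of_le_of_ne (hdom j) (Ne.symm hj)
    simp only [hddef]
    nlinarith [hlam j]
  have hvj : v j = 0 := by
    have := congrFun hu0 j
    simp only [hudef, Pi.zero_apply] at this
    rcases mul_eq_zero.mp this with h | h
    · exact absurd h hdj.ne'
    · exact h
  -- entry (j,l) of identity 3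
  have hentry3 : (B - C⁻¹) j l = ∑ k, B j k * u k := by
    rw [hId3]
    have e3 : ∀ a b, (B * D) a b = B a b * d b := by
      intro a b
      rw [hDdef]
      exact Matrix.mul_diagonal _ _ _ _
    rw [Matrix.mul_apply]
    refine Finset.sum_congr rfl fun k _ => ?_
    rw [e3]
    simp only [hudef, hvdef]
    ring
  have : B j l - v j = 0 := by
    have h2 : ∑ k, B j k * u k = 0 := by
      rw [hu0]; simp
    have := hentry3
    rw [h2] at this
    simpa [Matrix.sub_apply, hvdef] using this
  have hBjl : B j l = 0 := by
    rw [hvj] at this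
    linarith
  rw [hsymB l j]
  exact hBjl

set_option maxHeartbeats 1000000 in
lemma snr_contra {L : ℕ} (hL : 0 < L) (lam : Fin L → ℝ) (hlam : ∀ l, 0 < lam l)
    (B : Matrix (Fin L) (Fin L) ℝ) (hB : B.PosDef) (hBdiag : ∀ l, B l l = 1)
    (hS : (Matrix.diagonal (fun l => Real.sqrt (lam l)) * Matrix.hadamard B B *
        Matrix.diagonal (fun l => Real.sqrt (lam l))).IsHermitian)
    (hSNR : 1 < ⨆ i, hS.eigenvalues i) :
    ∃ χ : Fin L → ℝ, (∀ l, -1 ≤ χ l) ∧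
      Rfun 1 lam B χ < Rfun 1 lam B (fun _ => -1) := by
  classical
  haveI : Nonempty (Fin L) := ⟨⟨0, hL⟩⟩
  set M : Matrix (Fin L) (Fin L) ℝ :=
    Matrix.diagonal (fun l => Real.sqrt (lam l)) * Matrix.hadamard B B *
      Matrix.diagonal (fun l => Real.sqrt (lam l)) with hMdef
  have hsymB : ∀ j k, B j k = B k j := by
    intro j k
    have := congrFun (congrFun hB.1 j) k
    simpa [Matrix.conjTranspose_apply] using this.symm
  have hMapp : ∀ j k, M j k = Real.sqrt (lam j) * (B j k * B j k) * Real.sqrt (lam k) := by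
    intro j k
    rw [hMdef]
    rw [Matrix.mul_apply]
    simp only [Matrix.diagonal_mul, Matrix.diagonal_apply, ite_mul, zero_mul,
      Matrix.hadamard_apply, mul_ite, mul_zero, Finset.sum_ite_eq, Finset.sum_ite_eq',
      Finset.mem_univ, if_true]
  have hMnn : ∀ j k, 0 ≤ M j k := by
    intro j k
    rw [hMapp]
    have h1 : 0 ≤ Real.sqrt (lam j) := Real.sqrt_nonneg _
    have h2 : 0 ≤ Real.sqrt (lam k) := Real.sqrt_nonneg _
    have := mul_nonneg (mul_nonneg h1 (mul_self_nonneg (B j k))) h2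
    linarith
  -- eigenvector for the top eigenvalue
  obtain ⟨i0, hi0⟩ := exists_eq_ciSup_of_finite (f := hS.eigenvalues)
  set μ0 := hS.eigenvalues i0 with hμ0def
  have hμ0 : 1 < μ0 := by rw [hi0]; exact hSNR
  set u : Fin L → ℝ := ⇑(hS.eigenvectorBasis i0) with hudef
  have hu : M *ᵥ u = μ0 • u := hS.mulVec_eigenvectorBasis i0
  have hune : u ≠ 0 := by
    intro h
    apply hS.eigenvectorBasis.orthonormal.ne_zero i0
    ext j
    exact congrFun h j
  obtain ⟨j0, hj0⟩ := Function.ne_iff.mp hune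
  have hq : 0 < ∑ j, u j ^ 2 := by
    apply Finset.sum_pos'
    · intro j _; positivity
    · have hj0' : u j0 ≠ 0 := by simpa using hj0
      exact ⟨j0, Finset.mem_univ j0, by positivity⟩
  set q := ∑ j, u j ^ 2 with hqdef
  -- quadratic form identity
  have hquad : ∑ j, ∑ k, M j k * (u j * u k) = μ0 * q := by
    have h1 : ∀ j, ∑ k, M j k * u k = μ0 * u j := by
      intro j
      have := congrFun hu j
      simpa [Matrix.mulVec, dotProduct, Pi.smul_apply, smul_eq_mul] using this
    calc ∑ j, ∑ k, M j k * (u j * u k) = ∑ j, u j * (∑ k, M j k * u k) := by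
          refine Finset.sum_congr rfl fun j _ => ?_
          rw [Finset.mul_sum]
          refine Finset.sum_congr rfl fun k _ => by ring
      _ = ∑ j, u j * (μ0 * u j) := by
          refine Finset.sum_congr rfl fun j _ => by rw [h1]
      _ = μ0 * q := by
          rw [hqdef, Finset.mul_sum]
          refine Finset.sum_congr rfl fun j _ => by ring
  clear_value μ0
  set w : Fin L → ℝ := fun j => |u j| with hwdef
  have hw0 : ∀ j, 0 ≤ w j := fun j => abs_nonneg _
  have hwsq : ∑ j, w j ^ 2 = q := by
    rw [hqdef]
    exact Finset.sum_congr rfl fun j _ => by rw [hwdef]; simp [sq_abs]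
  set Q := ∑ j, ∑ k, M j k * (w j * w k) with hQdef
  have hQge : μ0 * q ≤ Q := by
    rw [hQdef, ← hquad]
    refine Finset.sum_le_sum fun j _ => Finset.sum_le_sum fun k _ => ?_
    apply mul_le_mul_of_nonneg_left _ (hMnn j k)
    calc u j * u k ≤ |u j * u k| := le_abs_self _
      _ = w j * w k := by rw [hwdef, abs_mul]
  have hQq : q < Q := by nlinarith
  -- the direction v
  clear_value u
  set v : Fin L → ℝ := fun j => w j / Real.sqrt (lam j) with hvdef
  have hsqlam : ∀ j, Real.sqrt (lam j) * Real.sqrt (lam j) = lam j :=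
    fun j => Real.mul_self_sqrt (hlam j).le
  have hsqpos : ∀ j, 0 < Real.sqrt (lam j) := fun j => Real.sqrt_pos.mpr (hlam j)
  have hv0 : ∀ j, 0 ≤ v j := fun j => div_nonneg (hw0 j) (hsqpos j).le
  have hlamv : ∀ j, lam j * v j = Real.sqrt (lam j) * w j := by
    intro j
    have hs := (hsqpos j).ne'
    rw [hvdef, ← hsqlam j]
    field_simp
    rw [Real.sqrt_sq (hsqpos j).le]
    ring
  have hlamv2 : ∀ j, lam j * v j ^ 2 = w j ^ 2 := by
    intro j
    have hs := (hsqpos j).ne'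
    rw [hvdef, ← hsqlam j]
    field_simp
  set A := ∑ j, Real.sqrt (lam j) * w j with hAdef
  have hA0 : 0 ≤ A := Finset.sum_nonneg fun j _ => mul_nonneg (hsqpos j).le (hw0 j)
  -- choose t
  clear_value q Q
  set t := min 1 ((3 * (Q - q)) / (2 * (A ^ 3 + 1))) with htdef
  have ht0 : 0 < t := by
    apply lt_min one_pos
    have h1 : 0 < Q - q := by linarith
    have h2 : 0 < A ^ 3 + 1 := by positivity
    positivity
  have htA : t * A ^ 3 / 3 < (Q - q) / 2 := by
    have h2 : (0:ℝ) < A ^ 3 + 1 := by positivity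
    have hle : t ≤ 3 * (Q - q) / (2 * (A ^ 3 + 1)) := min_le_right _ _
    have h3 : t * A ^ 3 ≤ (3 * (Q - q) / (2 * (A ^ 3 + 1))) * A ^ 3 := by
      apply mul_le_mul_of_nonneg_right hle (by positivity)
    have h4 : (3 * (Q - q) / (2 * (A ^ 3 + 1))) * A ^ 3 < 3 * (Q - q) / 2 := by
      rw [div_mul_eq_mul_div, div_lt_div_iff₀ (by positivity) (by norm_num)]
      nlinarith
    nlinarith
  clear_value t
  -- the comparison point
  refine ⟨fun j => -1 + t * v j, fun j => ?_, ?_⟩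
  · show -1 ≤ -1 + t * v j
    have := mul_nonneg ht0.le (hv0 j)
    linarith
  -- compute both values
  set dfun : Fin L → ℝ := fun j => lam j * ((-1 + t * v j) + 1) with hdfdef
  have hdf : ∀ j, dfun j = t * (Real.sqrt (lam j) * w j) := by
    intro j
    have h1 : dfun j = t * (lam j * v j) := by rw [hdfdef]; ring
    rw [h1, hlamv j]
  have hdf0 : ∀ j, 0 ≤ dfun j := by
    intro j
    rw [hdf]
    exact mul_nonneg ht0.le (mul_nonneg (hsqpos j).le (hw0 j))
  obtain ⟨μs, hμs0, hμsdet, hμstr, hμstr2⟩ := detC B hB dfun hdf0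
  have hdetBinv : 0 < B⁻¹.det := hB.inv.det_pos
  -- value at the base point
  have hbase : Rfun 1 lam B (fun _ => -1) = Real.log B⁻¹.det + (1/2) * ∑ l, lam l := by
    rw [Rfun, Cmat_eq]
    have h1 : (fun j => lam j * ((-1:ℝ) + 1)) = fun _ => (0:ℝ) := by
      funext j; ring
    rw [h1]
    rw [Matrix.diagonal_zero, add_zero]
    congr 1
    rw [Finset.mul_sum, Finset.mul_sum]
    refine Finset.sum_congr rfl fun l _ => by ring
  -- sums of μs
  have hStr : ∑ i, μs i = t * A := by
    rw [hμstr, hAdef, Finset.mul_sum]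
    refine Finset.sum_congr rfl fun j _ => ?_
    rw [hdf, hBdiag]
    ring
  have hStr2 : ∑ i, μs i ^ 2 = t ^ 2 * Q := by
    rw [hμstr2, hQdef, Finset.mul_sum]
    refine Finset.sum_congr rfl fun j _ => ?_
    rw [Finset.mul_sum]
    refine Finset.sum_congr rfl fun k _ => ?_
    rw [hdf, hdf, hMapp, ← hsymB j k]
    ring
  -- bound on sum of cubes
  have hcube : ∑ i, μs i ^ 3 ≤ (∑ i, μs i) ^ 3 := by
    have hle : ∀ i, μs i ≤ ∑ i', μs i' := by
      intro i
      exact Finset.single_le_sum (fun i' _ => hμs0 i') (Finset.mem_univ i)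
    have hsum0 : 0 ≤ ∑ i', μs i' := Finset.sum_nonneg fun i _ => hμs0 i
    calc ∑ i, μs i ^ 3 ≤ ∑ i, μs i * (∑ i', μs i') ^ 2 := by
          refine Finset.sum_le_sum fun i _ => ?_
          calc μs i ^ 3 = μs i * μs i ^ 2 := by ring
            _ ≤ μs i * (∑ i', μs i') ^ 2 :=
                mul_le_mul_of_nonneg_left (pow_le_pow_left₀ (hμs0 i) (hle i) 2) (hμs0 i)
      _ = (∑ i', μs i') ^ 2 * ∑ i, μs i := by
          rw [Finset.mul_sum]
          refine Finset.sum_congr rfl fun i _ => by ring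
      _ = (∑ i, μs i) ^ 3 := by ring
  -- log det bound
  have hlogdet : Real.log (Cmat 1 lam B (fun j => -1 + t * v j)).det
      ≤ Real.log B⁻¹.det + (t * A - t ^ 2 * Q / 2 + (t * A) ^ 3 / 3) := by
    rw [Cmat_eq]
    have hfeq : (fun j => lam j * ((fun j => -1 + t * v j) j + 1)) = dfun := by
      funext j; rw [hdfdef]
    rw [hfeq, hμsdet]
    have hprodpos : ∀ i, (0:ℝ) < 1 + μs i := fun i => by linarith [hμs0 i]
    rw [Real.log_mul hdetBinv.ne' (Finset.prod_pos (fun i _ => hprodpos i)).ne',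
      Real.log_prod (fun i _ => (hprodpos i).ne')]
    have hlog : ∑ i, Real.log (1 + μs i)
        ≤ ∑ i, (μs i - μs i ^ 2 / 2 + μs i ^ 3 / 3) :=
      Finset.sum_le_sum fun i _ => log_cubic (hμs0 i)
    have hsplit : ∑ i, (μs i - μs i ^ 2 / 2 + μs i ^ 3 / 3)
        = (∑ i, μs i) - (∑ i, μs i ^ 2) / 2 + (∑ i, μs i ^ 3) / 3 := by
      rw [Finset.sum_add_distrib, Finset.sum_sub_distrib, Finset.sum_div, Finset.sum_div]
    have hfin : (∑ i, μs i) - (∑ i, μs i ^ 2) / 2 + (∑ i, μs i ^ 3) / 3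
        ≤ t * A - t ^ 2 * Q / 2 + (t * A) ^ 3 / 3 := by
      have h5 := hcube
      rw [hStr] at h5
      rw [hStr, hStr2]
      linarith
    linarith
  -- quadratic part
  have hquadpart : (1/2) * ∑ l, lam l * ((-1) + t * v l) ^ 2
      = (1/2) * ∑ l, lam l - t * A + t ^ 2 / 2 * q := by
    have hterm : ∀ l, lam l * ((-1) + t * v l) ^ 2
        = lam l - 2 * t * (Real.sqrt (lam l) * w l) + t ^ 2 * w l ^ 2 := by
      intro l
      have e0 : lam l * ((-1) + t * v l) ^ 2
          = lam l - 2 * t * (lam l * v l) + t ^ 2 * (lam l * v l ^ 2) := by ring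
      rw [e0, hlamv l, hlamv2 l]
    calc (1/2) * ∑ l, lam l * ((-1) + t * v l) ^ 2
        = (1/2) * ∑ l, (lam l - 2 * t * (Real.sqrt (lam l) * w l) + t ^ 2 * w l ^ 2) := by
          rw [Finset.sum_congr rfl fun l _ => hterm l]
      _ = (1/2) * ((∑ l, lam l) - 2 * t * A + t ^ 2 * q) := by
          have e3 : ∑ l, 2 * t * (Real.sqrt (lam l) * w l) = 2 * t * A := by
            rw [hAdef, Finset.mul_sum]
          have e4 : ∑ l, t ^ 2 * w l ^ 2 = t ^ 2 * q := by
            rw [← hwsq, Finset.mul_sum]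
          rw [Finset.sum_add_distrib, Finset.sum_sub_distrib, e3, e4]
      _ = (1/2) * ∑ l, lam l - t * A + t ^ 2 / 2 * q := by ring
  -- final comparison
  rw [Rfun, hbase]
  have hfin2 : (1/2) * ∑ l, lam l * ((-1) + t * v l) ^ 2
      = (1/2) * ∑ l, lam l - t * A + t ^ 2 / 2 * q := hquadpart
  have hmul := mul_lt_mul_of_pos_left htA (mul_pos ht0 ht0)
  calc Real.log (Cmat 1 lam B fun j => -1 + t * v j).det
        + 1 / 2 * ∑ l, lam l * (-1 + t * v l) ^ 2
      ≤ (Real.log B⁻¹.det + (t * A - t ^ 2 * Q / 2 + (t * A) ^ 3 / 3))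
        + ((1/2) * ∑ l, lam l - t * A + t ^ 2 / 2 * q) := by
        have h6 : (1:ℝ) / 2 * ∑ l, lam l * (-1 + t * v l) ^ 2
            = (1/2) * ∑ l, lam l - t * A + t ^ 2 / 2 * q := hfin2
        linarith [hlogdet]
    _ < Real.log B⁻¹.det + 1 / 2 * ∑ l, lam l := by nlinarith [hmul, hQq, ht0]

end main

/-- if `B` is irreducible and `SNR(λ,B) > 1` (largest eigenvalue of
`Diag(√λ)(B⊙B)Diag(√λ)` greater than one), then `χ ↦ R(χ,1)` attains a global minimum
over `[-1,∞)^L` at some point of the open cube `(-1,0)^L`. -/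
theorem stmt4 {L : ℕ} (hL : 0 < L) (lam : Fin L → ℝ) (hlam : ∀ l, 0 < lam l)
    (B : Matrix (Fin L) (Fin L) ℝ) (hB : B.PosDef) (hBdiag : ∀ l, B l l = 1)
    (hIrr : MatrixIrreducible B)
    (hS : (Matrix.diagonal (fun l => Real.sqrt (lam l)) * Matrix.hadamard B B *
        Matrix.diagonal (fun l => Real.sqrt (lam l))).IsHermitian)
    (hSNR : 1 < ⨆ i, hS.eigenvalues i) :
    ∃ χs : Fin L → ℝ, (∀ l, -1 < χs l ∧ χs l < 0) ∧
      ∀ χ : Fin L → ℝ, (∀ l, -1 ≤ χ l) → Rfun 1 lam B χs ≤ Rfun 1 lam B χ := by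
  classical
  obtain ⟨χs, hdom, hmin⟩ := exists_min lam B hL hB hlam
  by_cases hall : ∀ l, -1 < χs l
  · refine ⟨χs, fun l => ?_, hmin⟩
    have h1 := (first_order lam B hB hlam χs hdom hmin l).1
    have h2 := (first_order lam B hB hlam χs hdom hmin l).2 (hall l)
    have hC := Cmat_posdef lam B hB hlam χs hdom
    have hα := posdef_diag_pos hC.inv l
    exact ⟨hall l, by linarith⟩
  · exfalso
    push_neg at hall
    obtain ⟨l0, hl0⟩ := hall
    have hl0' : χs l0 = -1 := le_antisymm hl0 (hdom l0)
    by_cases hallb : ∀ j, χs j = -1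
    · obtain ⟨χ, hχdom, hχlt⟩ := snr_contra hL lam hlam B hB hBdiag hS hSNR
      have hconst : χs = fun _ => -1 := funext hallb
      rw [hconst] at hmin
      exact absurd (hmin χ hχdom) (not_le.mpr hχlt)
    · push_neg at hallb
      obtain ⟨j0, hj0⟩ := hallb
      apply hIrr
      refine ⟨Finset.univ.filter (fun j => χs j = -1),
        ⟨l0, Finset.mem_filter.mpr ⟨Finset.mem_univ _, hl0'⟩⟩, ?_, ?_⟩
      · intro hEq
        have hj0mem : j0 ∈ Finset.univ.filter (fun j => χs j = -1) := by
          rw [hEq]; exact Finset.mem_univ j0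
        exact hj0 (Finset.mem_filter.mp hj0mem).2
      · intro i hi j hj
        have hi' : χs i = -1 := (Finset.mem_filter.mp hi).2
        have hj' : χs j ≠ -1 := fun hh =>
          hj (Finset.mem_filter.mpr ⟨Finset.mem_univ _, hh⟩)
        have hfo := (first_order lam B hB hlam χs hdom hmin i).1
        have hα : 1 ≤ (Cmat 1 lam B χs)⁻¹ i i := by rw [hi'] at hfo; linarith
        exact boundary lam B hB hBdiag hlam χs hdom i hi' hα j hj'
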